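/- arXiv:1708.03673 — 2 statements merged into one kernel-verified Lean document; each statement's English description precedes it below -/
import Mathlib

section
/- Let k ≥ 1, let w ∈ G_{k+1} be a good involution, let x = t s_1 s_2 ⋯ s_k ∈ B_{k+1}, and for 1 ≤ i ≤ k let x_i = t s_1 ⋯ ŝ_i ⋯ s_k (the product with s_i omitted). Then: (i) x⁻¹wx ∈ B_k if and only if w(1) = 1; (ii) x⁻¹wtx ∈ B_k if and only if w(1) = −1; (iii) for 1 ≤ i ≤ k, x⁻¹w x_i ∈ B_k if and only if w(1) = −(i+1). Moreover, in each of these cases the resulting element of B_k is a good involution. -/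
namespace PaperB

open scoped Classical

def B (n : ℕ) : Subgroup (Equiv.Perm ℤ) where
  carrier := {w | (∀ i : ℤ, w (-i) = - w i) ∧ ∀ i : ℤ, (n : ℤ) < |i| → w i = i}
  one_mem' := ⟨fun _ => rfl, fun _ _ => rfl⟩
  mul_mem' := by
    rintro a b ⟨ha1, ha2⟩ ⟨hb1, hb2⟩
    refine ⟨fun i => ?_, fun i hi => ?_⟩
    · rw [Equiv.Perm.mul_apply, Equiv.Perm.mul_apply, hb1, ha1]
    · rw [Equiv.Perm.mul_apply, hb2 i hi, ha2 i hi]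
  inv_mem' := by
    rintro a ⟨ha1, ha2⟩
    refine ⟨fun i => a.injective ?_, fun i hi => a.injective ?_⟩
    · rw [Equiv.Perm.coe_inv, Equiv.apply_symm_apply, ha1, Equiv.apply_symm_apply]
    · rw [Equiv.Perm.coe_inv, Equiv.apply_symm_apply, ha2 i hi]

def t : Equiv.Perm ℤ := Equiv.swap (-1) 1

def s (i : ℕ) : Equiv.Perm ℤ :=
  Equiv.swap (i : ℤ) ((i : ℤ) + 1) * Equiv.swap (-(i : ℤ)) (-((i : ℤ) + 1))

def gens (n : ℕ) : Set (Equiv.Perm ℤ) := insert t (s '' Set.Ico 1 n)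

noncomputable def len (n : ℕ) (w : Equiv.Perm ℤ) : ℕ :=
  sInf {l | ∃ L : List (Equiv.Perm ℤ), (∀ g ∈ L, g ∈ gens n) ∧ L.prod = w ∧ L.length = l}

/-- A model of the Iwahori–Hecke algebra `H_{p,q}(Bₘ)`:  a `ℂ`-algebra `H` together with a
family `T w`, `w ∈ Bₘ`, which is linearly independent, satisfies `T 1 = 1`, and satisfies the
standard multiplication rule
`T w * T g = T (w g)` if `ℓ(w g) > ℓ(w)` and
`T w * T g = par(g) T (w g) + (1 - par(g)) T w` otherwise,
where `par t = p` and `par sᵢ = q`. -/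
structure HeckeModel (m : ℕ) (p q : ℂ) (H : Type) [Ring H] [Algebra ℂ H] where
  T : Equiv.Perm ℤ → H
  T_one : T 1 = 1
  T_mul : ∀ w ∈ B m, ∀ g ∈ gens m,
    T w * T g =
      if len m w < len m (w * g) then T (w * g)
      else (if g = t then p else q) • T (w * g) + (1 - if g = t then p else q) • T w
  free : LinearIndependent ℂ (fun w : {x // x ∈ B m} => T w.1)

/-- The element `-w`, given by `(-w)(i) = -(w i)`. -/
def negOf (w : Equiv.Perm ℤ) : Equiv.Perm ℤ := (Equiv.neg ℤ : Equiv.Perm ℤ) * w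

/-- A good involution in `B_k`. -/
def Good (k : ℕ) (w : Equiv.Perm ℤ) : Prop :=
  w ∈ B k ∧ w * w = 1 ∧ ∀ i : ℤ, 1 ≤ i → i ≤ (k : ℤ) → (w i = i ∨ w i < 0)

/-- `a(w)`: the number of `1 ≤ j ≤ m` with `w j = j`. -/
noncomputable def aFix (m : ℕ) (w : Equiv.Perm ℤ) : ℕ :=
  ((Finset.Icc (1 : ℤ) (m : ℤ)).filter fun j => w j = j).card

/-- `d(i, w)`: the number of `i < j ≤ m` with `w j = j`. -/
noncomputable def dFix (m : ℕ) (i : ℤ) (w : Equiv.Perm ℤ) : ℕ :=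
  ((Finset.Ioc i (m : ℤ)).filter fun j => w j = j).card

/-- `c(w)`: the number of `w`-tidy pairs `{i, j}`, i.e. pairs of distinct indices
`1 ≤ i, j ≤ m` with `-w i < j` and `-w j < i`. -/
noncomputable def cTidy (m : ℕ) (w : Equiv.Perm ℤ) : ℕ :=
  (((Finset.Icc (1 : ℤ) (m : ℤ)) ×ˢ (Finset.Icc (1 : ℤ) (m : ℤ))).filter
    fun pr => pr.1 < pr.2 ∧ -w pr.1 < pr.2 ∧ -w pr.2 < pr.1).card

/-- `x = t s₁ s₂ ⋯ s_k ∈ B_{k+1}`. -/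
def xE (k : ℕ) : Equiv.Perm ℤ := (t :: ((List.range k).map fun j => s (j + 1))).prod

/-- `xᵢ = t s₁ ⋯ ŝᵢ ⋯ s_k ∈ B_{k+1}` (the product with `sᵢ` omitted). -/
def xI (k i : ℕ) : Equiv.Perm ℤ :=
  (t :: ((((List.range k).map fun j => j + 1).filter fun j => j ≠ i).map s)).prod


/-- The parabolic subgroup `S_k ⊆ B_k` generated by `s₁, …, s_{k-1}`. -/
def Spar (k : ℕ) : Subgroup (Equiv.Perm ℤ) := Subgroup.closure (s '' Set.Ico 1 k)

/-- `c(-w)` for `w ∈ S_k`: the number of neat pairs of `w`, i.e. pairs `{i,j}` of distinct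
indices `1 ≤ i, j ≤ k` with `w i < j` and `w j < i`. -/
noncomputable def cNeat (k : ℕ) (w : Equiv.Perm ℤ) : ℕ :=
  (((Finset.Icc (1 : ℤ) (k : ℤ)) ×ˢ (Finset.Icc (1 : ℤ) (k : ℤ))).filter
    fun pr => pr.1 < pr.2 ∧ w pr.1 < pr.2 ∧ w pr.2 < pr.1).card

/-- The set `X_{0,k}` of distinguished (minimal length) right coset representatives of
`S_k` in `B_k`. -/
def X0 (k : ℕ) : Set (Equiv.Perm ℤ) :=
  {x | x ∈ B k ∧ ∀ u ∈ Spar k, len k x ≤ len k (u * x)}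

/-- `Succ(w)` for a good involution `w ∈ G_k`. -/
def Succ (k : ℕ) (w : Equiv.Perm ℤ) : Set (Equiv.Perm ℤ) :=
  {xE k * w * (xE k)⁻¹, xE k * w * (xE k)⁻¹ * t} ∪
    {y | ∃ i : ℕ, 1 ≤ i ∧ i ≤ k ∧ w (i : ℤ) = (i : ℤ) ∧ y = xE k * w * (xI k i)⁻¹}

/-- The element `c = s_{n+1} s_{n+2} ⋯ s_{n+k} ∈ B_{n+k+1}`. -/
def cElt (n k : ℕ) : Equiv.Perm ℤ := ((List.range k).map fun j => s (n + 1 + j)).prod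

/-- The palindromic product `s_{n+k} s_{n+k-1} ⋯ s_{n+i} ⋯ s_{n+k-1} s_{n+k}`. -/
def pal (n k i : ℕ) : Equiv.Perm ℤ :=
  (((List.range (k - i)).map fun j => s (n + k - j)) ++ [s (n + i)] ++
    ((List.range (k - i)).map fun j => s (n + i + 1 + j))).prod

/-- The parabolic subgroup `B_n × S_k` of `B_{n+k}`, generated by
`{t, s₁, …, s_{n-1}} ∪ {s_{n+1}, …, s_{n+k-1}}` (with `t` omitted when `n = 0`). -/
def P (n k : ℕ) : Subgroup (Equiv.Perm ℤ) :=
  Subgroup.closure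
    ((if n = 0 then (∅ : Set (Equiv.Perm ℤ)) else {t}) ∪ s '' Set.Ico 1 n ∪
      s '' Set.Ico (n + 1) (n + k))

/-- The factor `S_k` of `B_n × S_k`, generated by `s_{n+1}, …, s_{n+k-1}`. -/
def SparF (n k : ℕ) : Subgroup (Equiv.Perm ℤ) := Subgroup.closure (s '' Set.Ico (n + 1) (n + k))

/-- The set `X_{n,k}` of distinguished (minimal length) right coset representatives of
`B_n × S_k` in `B_{n+k}`. -/
def Xnk (n k : ℕ) : Set (Equiv.Perm ℤ) :=
  {x | x ∈ B (n + k) ∧ ∀ u ∈ P n k, len (n + k) x ≤ len (n + k) (u * x)}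

/-- The strict Bruhat order on `B_m`: `x < w` iff `x ≠ w` and some reduced expression of `w`
has a subword whose product is `x`. -/
def bruhatLT (m : ℕ) (x w : Equiv.Perm ℤ) : Prop :=
  x ≠ w ∧ ∃ L : List (Equiv.Perm ℤ), (∀ g ∈ L, g ∈ gens m) ∧ L.prod = w ∧ L.length = len m w ∧
    ∃ L' : List (Equiv.Perm ℤ), L'.Sublist L ∧ L'.prod = x

def tF (j : ℤ) : ℤ := if j = 1 then -1 else if j = -1 then 1 else j

lemma t_apply (j : ℤ) : t j = tF j := by
  unfold t tF
  rw [Equiv.swap_apply_def]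
  split_ifs <;> first | contradiction | omega

def sF (i : ℕ) (j : ℤ) : ℤ :=
  if j = (i:ℤ) then (i:ℤ)+1 else if j = (i:ℤ)+1 then (i:ℤ)
  else if j = -(i:ℤ) then -((i:ℤ)+1) else if j = -((i:ℤ)+1) then -(i:ℤ) else j

lemma s_apply (i : ℕ) (hi : 1 ≤ i) (j : ℤ) : s i j = sF i j := by
  have hi' : (1:ℤ) ≤ (i:ℤ) := by exact_mod_cast hi
  unfold s sF
  rw [Equiv.Perm.mul_apply]
  simp only [Equiv.swap_apply_def]
  split_ifs <;> first | contradiction | omega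

def Pk (k : ℕ) : Equiv.Perm ℤ := ((List.range k).map fun j => s (j + 1)).prod

lemma xE_eq (k : ℕ) : xE k = t * Pk k := by unfold xE Pk; rw [List.prod_cons]

def pkF (k : ℕ) (j : ℤ) : ℤ :=
  if 1 ≤ j ∧ j ≤ (k:ℤ) then j+1 else if j = (k:ℤ)+1 then 1
  else if -(k:ℤ) ≤ j ∧ j ≤ -1 then j-1 else if j = -((k:ℤ)+1) then -1 else j

set_option maxHeartbeats 1000000 in
lemma pk_apply (k : ℕ) : ∀ j, Pk k j = pkF k j := by
  induction k with
  | zero =>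
    intro j
    unfold Pk pkF
    simp only [List.range_zero, List.map_nil, List.prod_nil, Equiv.Perm.one_apply]
    push_cast
    split_ifs <;> first | contradiction | omega
  | succ k ih =>
    have hPk : Pk (k+1) = Pk k * s (k+1) := by
      unfold Pk
      rw [List.range_succ, List.map_append, List.prod_append]
      simp
    intro j
    rw [hPk, Equiv.Perm.mul_apply, s_apply _ (by omega), ih]
    unfold pkF sF
    push_cast
    split_ifs <;> first | contradiction | omega
def xeF (k : ℕ) (j : ℤ) : ℤ :=
  if 1 ≤ j ∧ j ≤ (k:ℤ) then j+1 else if j = (k:ℤ)+1 then -1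
  else if -(k:ℤ) ≤ j ∧ j ≤ -1 then j-1 else if j = -((k:ℤ)+1) then 1 else j

set_option maxHeartbeats 2000000 in
lemma xe_apply (k : ℕ) (j : ℤ) : xE k j = xeF k j := by
  rw [xE_eq, Equiv.Perm.mul_apply, pk_apply, t_apply]
  unfold pkF tF xeF
  split_ifs <;> first | contradiction | omega

def xeInvF (k : ℕ) (j : ℤ) : ℤ :=
  if 2 ≤ j ∧ j ≤ (k:ℤ)+1 then j-1 else if j = -1 then (k:ℤ)+1
  else if -((k:ℤ)+1) ≤ j ∧ j ≤ -2 then j+1 else if j = 1 then -((k:ℤ)+1) else j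

set_option maxHeartbeats 2000000 in
lemma xeInv_apply (k : ℕ) (j : ℤ) : (xE k)⁻¹ j = xeInvF k j := by
  have h : xE k (xeInvF k j) = j := by
    rw [xe_apply]; unfold xeF xeInvF; split_ifs <;> first | contradiction | omega
  conv_lhs => rw [← h]
  exact (xE k).symm_apply_apply _

def xiF (k i : ℕ) (j : ℤ) : ℤ :=
  if 1 ≤ j ∧ j ≤ (k:ℤ) ∧ j ≠ (i:ℤ) then j+1
  else if j = (i:ℤ) then -1
  else if j = (k:ℤ)+1 then (i:ℤ)+1
  else if -(k:ℤ) ≤ j ∧ j ≤ -1 ∧ j ≠ -(i:ℤ) then j-1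
  else if j = -(i:ℤ) then 1
  else if j = -((k:ℤ)+1) then -((i:ℤ)+1)
  else j

lemma filter_base (m : ℕ) :
    (((List.range (m+1)).map fun j => j + 1).filter fun j => j ≠ (m+1)) =
      (List.range m).map fun j => j + 1 := by
  rw [List.range_succ, List.map_append, List.filter_append]
  have h1 : (((List.range m).map fun j => j + 1).filter fun j => j ≠ (m+1)) =
      (List.range m).map fun j => j + 1 := by
    apply List.filter_eq_self.mpr
    intro a ha
    simp only [List.mem_map, List.mem_range] at ha
    obtain ⟨b, hb, rfl⟩ := ha
    simp only [decide_eq_true_eq]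
    omega
  have h2 : (([m].map fun j => j + 1).filter fun j => j ≠ (m+1)) = [] := by
    simp
  rw [h1, h2, List.append_nil]

lemma filter_step (k i : ℕ) (h : i ≤ k) :
    (((List.range (k+1)).map fun j => j + 1).filter fun j => j ≠ i) =
      ((((List.range k).map fun j => j + 1).filter fun j => j ≠ i)) ++ [k+1] := by
  rw [List.range_succ, List.map_append, List.filter_append]
  congr 1
  simp only [List.map_cons, List.map_nil, List.filter_cons, decide_eq_true_eq]
  rw [if_pos (by omega)]
  simp

set_option maxHeartbeats 2000000 in
lemma xi_apply (i k : ℕ) (h1 : 1 ≤ i) (hik : i ≤ k) : ∀ j, xI k i j = xiF k i j := by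
  induction k, hik using Nat.le_induction with
  | base =>
    obtain ⟨m, rfl⟩ : ∃ m, i = m + 1 := ⟨i - 1, by omega⟩
    have hx : xI (m+1) (m+1) = t * Pk m := by
      unfold xI Pk
      rw [filter_base, List.map_map, List.prod_cons]
      rfl
    intro j
    rw [hx, Equiv.Perm.mul_apply, pk_apply, t_apply]
    unfold pkF tF xiF
    push_cast
    split_ifs <;> first | contradiction | omega
  | succ k hk ih =>
    have hx : xI (k+1) i = xI k i * s (k+1) := by
      unfold xI
      rw [filter_step k i hk, List.map_append, List.map_cons, List.map_nil]
      rw [show (t :: (((((List.range k).map fun j => j + 1).filter fun j => j ≠ i).map s) ++ [s (k+1)])) =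
        (t :: ((((List.range k).map fun j => j + 1).filter fun j => j ≠ i).map s)) ++ [s (k+1)] from rfl]
      rw [List.prod_append, List.prod_cons, List.prod_cons, List.prod_nil, mul_one]
    intro j
    rw [hx, Equiv.Perm.mul_apply, s_apply _ (by omega), ih]
    unfold xiF sF
    split_ifs <;> first | contradiction | omega
lemma mem_B_iff (m : ℕ) (z : Equiv.Perm ℤ) :
    z ∈ B m ↔ (∀ i : ℤ, z (-i) = - z i) ∧ ∀ i : ℤ, (m : ℤ) < |i| → z i = i := Iff.rfl

set_option maxHeartbeats 2000000 in
lemma xE_mem (k : ℕ) : xE k ∈ B (k+1) := by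
  rw [mem_B_iff]
  constructor
  · intro i
    rw [xe_apply, xe_apply]
    unfold xeF
    split_ifs <;> first | contradiction | omega
  · intro i hi
    rw [lt_abs] at hi
    push_cast at hi
    rw [xe_apply]
    unfold xeF
    split_ifs <;> first | contradiction | omega

set_option maxHeartbeats 2000000 in
lemma xI_mem (k i : ℕ) (h1 : 1 ≤ i) (hik : i ≤ k) : xI k i ∈ B (k+1) := by
  rw [mem_B_iff]
  have hv := xi_apply i k h1 hik
  have h1' : (1:ℤ) ≤ (i:ℤ) := by exact_mod_cast h1
  have hik' : (i:ℤ) ≤ (k:ℤ) := by exact_mod_cast hik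
  constructor
  · intro j
    rw [hv, hv]
    unfold xiF
    split_ifs <;> first | contradiction | omega
  · intro j hj
    rw [lt_abs] at hj
    push_cast at hj
    rw [hv]
    unfold xiF
    split_ifs <;> first | contradiction | omega

lemma mem_B_succ_iff (k : ℕ) (z : Equiv.Perm ℤ) (hz : z ∈ B (k+1)) :
    z ∈ B k ↔ z ((k:ℤ)+1) = (k:ℤ)+1 := by
  obtain ⟨hodd, hfix⟩ := (mem_B_iff _ _).mp hz
  constructor
  · intro h
    exact ((mem_B_iff _ _).mp h).2 _ (by rw [abs_of_pos (by positivity)]; omega)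
  · intro h
    rw [mem_B_iff]
    refine ⟨hodd, fun j hj => ?_⟩
    rw [lt_abs] at hj
    by_cases h1 : j = (k:ℤ)+1
    · rw [h1]; exact h
    by_cases h2 : j = -((k:ℤ)+1)
    · rw [h2]
      have := hodd ((k:ℤ)+1)
      rw [h] at this
      rw [this]
    · exact hfix j (by rw [lt_abs]; push_cast; omega)

lemma sq_one_of_mem (m : ℕ) (z : Equiv.Perm ℤ) (hz : z ∈ B m)
    (h : ∀ j : ℤ, 1 ≤ j → j ≤ (m:ℤ) → z (z j) = j) : z * z = 1 := by
  obtain ⟨hodd, hfix⟩ := (mem_B_iff _ _).mp hz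
  ext j
  rw [Equiv.Perm.mul_apply, Equiv.Perm.one_apply]
  rcases lt_or_ge (m:ℤ) |j| with hj | hj
  · rw [hfix j hj, hfix j hj]
  · rw [abs_le] at hj
    rcases lt_trichotomy j 0 with h0 | h0 | h0
    · have e1 : z j = -(z (-j)) := by rw [← hodd, neg_neg]
      rw [e1, hodd, h (-j) (by omega) (by omega), neg_neg]
    · have hz0 : z 0 = 0 := by
        have := hodd 0
        rw [neg_zero] at this
        omega
      rw [h0, hz0, hz0]
    · exact h j (by omega) (by omega)

lemma good_of (m : ℕ) (z : Equiv.Perm ℤ) (hz : z ∈ B m)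
    (hsq : ∀ j : ℤ, 1 ≤ j → j ≤ (m:ℤ) → z (z j) = j)
    (hval : ∀ j : ℤ, 1 ≤ j → j ≤ (m:ℤ) → z j = j ∨ z j < 0) : Good m z :=
  ⟨hz, sq_one_of_mem m z hz hsq, hval⟩

lemma t_mem (m : ℕ) (hm : 1 ≤ m) : t ∈ B m := by
  rw [mem_B_iff]
  have : (1:ℤ) ≤ (m:ℤ) := by exact_mod_cast hm
  constructor
  · intro i
    rw [t_apply, t_apply]
    unfold tF
    split_ifs <;> first | contradiction | omega
  · intro i hi
    rw [lt_abs] at hi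
    rw [t_apply]
    unfold tF
    split_ifs <;> first | contradiction | omega
set_option maxHeartbeats 2000000 in
theorem pred_good (k : ℕ) (hk : 1 ≤ k) (w : Equiv.Perm ℤ) (hw : Good (k + 1) w) :
    ((xE k)⁻¹ * w * xE k ∈ B k ↔ w 1 = 1) ∧
    ((xE k)⁻¹ * (w * t) * xE k ∈ B k ↔ w 1 = -1) ∧
    (∀ i : ℕ, 1 ≤ i → i ≤ k → ((xE k)⁻¹ * w * xI k i ∈ B k ↔ w 1 = -((i : ℤ) + 1))) ∧
    (w 1 = 1 → Good k ((xE k)⁻¹ * w * xE k)) ∧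
    (w 1 = -1 → Good k ((xE k)⁻¹ * (w * t) * xE k)) ∧
    (∀ i : ℕ, 1 ≤ i → i ≤ k → w 1 = -((i : ℤ) + 1) → Good k ((xE k)⁻¹ * w * xI k i)) := by
  obtain ⟨hwB, hw2, hwgood⟩ := hw
  have hwodd : ∀ i : ℤ, w (-i) = -w i := ((mem_B_iff _ _).mp hwB).1
  have hwfix : ∀ i : ℤ, (k:ℤ)+1 < |i| → w i = i := by
    intro i hi
    exact ((mem_B_iff _ _).mp hwB).2 i (by push_cast; exact hi)
  have hww : ∀ j : ℤ, w (w j) = j := fun j => by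
    rw [← Equiv.Perm.mul_apply, hw2, Equiv.Perm.one_apply]
  have hinj : ∀ a b : ℤ, w a = w b → a = b := fun a b h => w.injective h
  have hbound : ∀ j : ℤ, -((k:ℤ)+1) ≤ j → j ≤ (k:ℤ)+1 →
      -((k:ℤ)+1) ≤ w j ∧ w j ≤ (k:ℤ)+1 := by
    intro j h1 h2
    by_contra hc
    have h3 : (k:ℤ)+1 < |w j| := by rw [lt_abs]; omega
    have h4 := hwfix _ h3
    have h5 := hww j
    rw [h4] at h5
    rw [lt_abs] at h3
    omega
  have hx : ∀ j, xE k j = xeF k j := xe_apply k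
  have hxi : ∀ j, (xE k)⁻¹ j = xeInvF k j := xeInv_apply k
  have hxB : xE k ∈ B (k+1) := xE_mem k
  have hw_1 : w (-1 : ℤ) = -(w 1) := hwodd 1
  have hxtop : xE k ((k:ℤ)+1) = -1 := by
    rw [hx]; unfold xeF; split_ifs <;> first | contradiction | omega
  -- Part (i) iff
  have hA : (xE k)⁻¹ * w * xE k ∈ B k ↔ w 1 = 1 := by
    have hzB : (xE k)⁻¹ * w * xE k ∈ B (k+1) :=
      mul_mem (mul_mem (inv_mem hxB) hwB) hxB
    rw [mem_B_succ_iff k _ hzB]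
    have e : ((xE k)⁻¹ * w * xE k) ((k:ℤ)+1) = xeInvF k (-(w 1)) := by
      simp only [Equiv.Perm.mul_apply]
      rw [hxtop, hw_1, hxi]
    rw [e]
    unfold xeInvF
    split_ifs <;> first | contradiction | omega
  -- Part (ii) iff
  have hB2 : (xE k)⁻¹ * (w * t) * xE k ∈ B k ↔ w 1 = -1 := by
    have hzB : (xE k)⁻¹ * (w * t) * xE k ∈ B (k+1) :=
      mul_mem (mul_mem (inv_mem hxB) (mul_mem hwB (t_mem (k+1) (by omega)))) hxB
    rw [mem_B_succ_iff k _ hzB]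
    have e : ((xE k)⁻¹ * (w * t) * xE k) ((k:ℤ)+1) = xeInvF k (w 1) := by
      simp only [Equiv.Perm.mul_apply]
      rw [hxtop]
      rw [show t (-1 : ℤ) = 1 from by rw [t_apply]; unfold tF; split_ifs <;> first | contradiction | omega]
      rw [hxi]
    rw [e]
    unfold xeInvF
    split_ifs <;> first | contradiction | omega
  -- Part (iii) iff
  have hC : ∀ i : ℕ, 1 ≤ i → i ≤ k →
      ((xE k)⁻¹ * w * xI k i ∈ B k ↔ w 1 = -((i : ℤ) + 1)) := by
    intro i h1i hik
    have h1i' : (1:ℤ) ≤ (i:ℤ) := by exact_mod_cast h1i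
    have hik' : (i:ℤ) ≤ (k:ℤ) := by exact_mod_cast hik
    have hyv := xi_apply i k h1i hik
    have hzB : (xE k)⁻¹ * w * xI k i ∈ B (k+1) :=
      mul_mem (mul_mem (inv_mem hxB) hwB) (xI_mem k i h1i hik)
    rw [mem_B_succ_iff k _ hzB]
    have e : ((xE k)⁻¹ * w * xI k i) ((k:ℤ)+1) = xeInvF k (w ((i:ℤ)+1)) := by
      simp only [Equiv.Perm.mul_apply]
      rw [show xI k i ((k:ℤ)+1) = (i:ℤ)+1 from by
        rw [hyv]; unfold xiF; split_ifs <;> first | contradiction | omega]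
      rw [hxi]
    rw [e]
    have step1 : xeInvF k (w ((i:ℤ)+1)) = (k:ℤ)+1 ↔ w ((i:ℤ)+1) = -1 := by
      unfold xeInvF; split_ifs <;> first | contradiction | omega
    rw [step1]
    constructor
    · intro h
      have h2 := hww ((i:ℤ)+1)
      rw [h, hw_1] at h2
      omega
    · intro h
      have h2 := hww (1:ℤ)
      rw [h] at h2
      have h3 := hwodd ((i:ℤ)+1)
      rw [h3] at h2
      omega
  -- Part (i) good
  have hD : w 1 = 1 → Good k ((xE k)⁻¹ * w * xE k) := by
    intro hw1
    refine ⟨hA.mpr hw1, ?_, ?_⟩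
    · have e : ((xE k)⁻¹ * w * xE k) * ((xE k)⁻¹ * w * xE k) =
          (xE k)⁻¹ * (w * w) * xE k := by group
      rw [e, hw2]
      group
    · intro j hj1 hjk
      have hzv : ((xE k)⁻¹ * w * xE k) j = xeInvF k (w (j+1)) := by
        simp only [Equiv.Perm.mul_apply]
        rw [show xE k j = j+1 from by
          rw [hx]; unfold xeF; split_ifs <;> first | contradiction | omega]
        rw [hxi]
      rw [hzv]
      rcases hwgood (j+1) (by omega) (by push_cast; omega) with h | h
      · left; rw [h]; unfold xeInvF; split_ifs <;> first | contradiction | omega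
      · right
        have hb := hbound (j+1) (by omega) (by omega)
        have hne : w (j+1) ≠ -1 := by
          intro hcon
          have : w (j+1) = w (-1:ℤ) := by rw [hcon, hw_1, hw1]
          have := hinj _ _ this
          omega
        unfold xeInvF; split_ifs <;> first | contradiction | omega
  -- Part (ii) good
  have hE : w 1 = -1 → Good k ((xE k)⁻¹ * (w * t) * xE k) := by
    intro hw1
    refine ⟨hB2.mpr hw1, ?_, ?_⟩
    · have hwt : (w * t) * (w * t) = 1 := by
        apply sq_one_of_mem (k+1) _ (mul_mem hwB (t_mem (k+1) (by omega)))
        intro j hj1 hjk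
        push_cast at hjk
        simp only [Equiv.Perm.mul_apply]
        by_cases hj : j = 1
        · rw [hj]
          rw [show t (1:ℤ) = -1 from by
            rw [t_apply]; unfold tF; split_ifs <;> first | contradiction | omega]
          rw [show w (-1:ℤ) = 1 from by rw [hw_1, hw1]; norm_num]
          rw [show t (1:ℤ) = -1 from by
            rw [t_apply]; unfold tF; split_ifs <;> first | contradiction | omega]
          rw [show w (-1:ℤ) = 1 from by rw [hw_1, hw1]; norm_num]
        · have ht : t j = j := by
            rw [t_apply]; unfold tF; split_ifs <;> first | contradiction | omega
          rw [ht]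
          have hm1 : w j ≠ 1 := by
            intro hcon
            have := hww j
            rw [hcon, hw1] at this
            omega
          have hm2 : w j ≠ -1 := by
            intro hcon
            have := hww j
            rw [hcon, hw_1, hw1] at this
            omega
          rw [show t (w j) = w j from by
            rw [t_apply]; unfold tF; split_ifs <;> first | contradiction | omega]
          exact hww j
      have e : ((xE k)⁻¹ * (w * t) * xE k) * ((xE k)⁻¹ * (w * t) * xE k) =
          (xE k)⁻¹ * ((w * t) * (w * t)) * xE k := by group
      rw [e, hwt]
      group
    · intro j hj1 hjk
      have hzv : ((xE k)⁻¹ * (w * t) * xE k) j = xeInvF k (w (j+1)) := by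
        simp only [Equiv.Perm.mul_apply]
        rw [show xE k j = j+1 from by
          rw [hx]; unfold xeF; split_ifs <;> first | contradiction | omega]
        rw [show t (j+1) = j+1 from by
          rw [t_apply]; unfold tF; split_ifs <;> first | contradiction | omega]
        rw [hxi]
      rw [hzv]
      rcases hwgood (j+1) (by omega) (by push_cast; omega) with h | h
      · left; rw [h]; unfold xeInvF; split_ifs <;> first | contradiction | omega
      · right
        have hb := hbound (j+1) (by omega) (by omega)
        have hne : w (j+1) ≠ -1 := by
          intro hcon
          have h2 := hww (j+1)
          rw [hcon, hw_1, hw1] at h2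
          omega
        unfold xeInvF; split_ifs <;> first | contradiction | omega
  -- Part (iii) good
  have hF : ∀ i : ℕ, 1 ≤ i → i ≤ k → w 1 = -((i : ℤ) + 1) →
      Good k ((xE k)⁻¹ * w * xI k i) := by
    intro i h1i hik hw1
    have h1i' : (1:ℤ) ≤ (i:ℤ) := by exact_mod_cast h1i
    have hik' : (i:ℤ) ≤ (k:ℤ) := by exact_mod_cast hik
    have hyv := xi_apply i k h1i hik
    have hiZ1 : w ((i:ℤ)+1) = -1 := by
      have h2 := hww (1:ℤ)
      rw [hw1] at h2
      have h3 := hwodd ((i:ℤ)+1)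
      rw [h3] at h2
      omega
    have hneg1 : w (-1:ℤ) = (i:ℤ)+1 := by rw [hw_1, hw1]; ring
    have hzv : ∀ j : ℤ, ((xE k)⁻¹ * w * xI k i) j = xeInvF k (w (xiF k i j)) := by
      intro j
      simp only [Equiv.Perm.mul_apply]
      rw [hyv, hxi]
    refine good_of k _ ((hC i h1i hik).mpr hw1) ?_ ?_
    · -- involution pointwise
      intro j hj1 hjk
      rw [hzv j]
      by_cases hji : j = (i:ℤ)
      · have e0 : xiF k i j = -1 := by
          unfold xiF; split_ifs <;> first | contradiction | omega
        have e1 : xeInvF k (w (xiF k i j)) = j := by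
          rw [e0, hneg1]; unfold xeInvF; split_ifs <;> first | contradiction | omega
        rw [e1, hzv j, e0, hneg1]
        unfold xeInvF; split_ifs <;> first | contradiction | omega
      · have e0 : xiF k i j = j+1 := by
          unfold xiF; split_ifs <;> first | contradiction | omega
        rw [e0]
        rcases hwgood (j+1) (by omega) (by push_cast; omega) with h | h
        · rw [h]
          have e1 : xeInvF k (j+1) = j := by
            unfold xeInvF; split_ifs <;> first | contradiction | omega
          rw [e1, hzv j, e0, h, e1]
        · have hb := hbound (j+1) (by omega) (by omega)
          have hne : w (j+1) ≠ -1 := by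
            intro hcon
            have := hinj (j+1) ((i:ℤ)+1) (by rw [hcon, hiZ1])
            omega
          have hnei : w (j+1) ≠ -((i:ℤ)+1) := by
            intro hcon
            have := hinj (j+1) 1 (by rw [hcon, hw1])
            omega
          have e1 : xeInvF k (w (j+1)) = w (j+1) + 1 := by
            unfold xeInvF; split_ifs <;> first | contradiction | omega
          rw [e1, hzv (w (j+1) + 1)]
          have e2 : xiF k i (w (j+1) + 1) = w (j+1) := by
            unfold xiF; split_ifs <;> first | contradiction | omega
          rw [e2, hww (j+1)]
          unfold xeInvF; split_ifs <;> first | contradiction | omega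
    · -- goodness values
      intro j hj1 hjk
      rw [hzv j]
      by_cases hji : j = (i:ℤ)
      · left
        rw [show xiF k i j = -1 from by
          unfold xiF; split_ifs <;> first | contradiction | omega]
        rw [hneg1]
        unfold xeInvF; split_ifs <;> first | contradiction | omega
      · rw [show xiF k i j = j+1 from by
          unfold xiF; split_ifs <;> first | contradiction | omega]
        rcases hwgood (j+1) (by omega) (by push_cast; omega) with h | h
        · left; rw [h]; unfold xeInvF; split_ifs <;> first | contradiction | omega
        · right
          have hb := hbound (j+1) (by omega) (by omega)
          have hne : w (j+1) ≠ -1 := by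
            intro hcon
            have := hinj (j+1) ((i:ℤ)+1) (by rw [hcon, hiZ1])
            omega
          unfold xeInvF; split_ifs <;> first | contradiction | omega
  exact ⟨hA, hB2, hC, hD, hE, hF⟩

end PaperB
end

section
/- Let k ≥ 1 and let w ∈ G_k be a good involution. Then: (1) a(xwx⁻¹) = a(w) + 1 and a(−xwx⁻¹) = a(−w); (2) a(xwx⁻¹t) = a(w) and a(−xwx⁻¹t) = a(−w) + 1; (3) for any 1 ≤ i ≤ k with w(i) = i, a(xw x_i⁻¹) = a(w) − 1 and a(−xw x_i⁻¹) = a(−w). -/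
namespace PaperB

open scoped Classical

lemma s_apply_s5 (i : ℕ) (hi : 1 ≤ i) (j : ℤ) :
    s i j = if j = (i:ℤ) then (i:ℤ)+1 else if j = (i:ℤ)+1 then (i:ℤ)
      else if j = -(i:ℤ) then -((i:ℤ)+1) else if j = -((i:ℤ)+1) then -(i:ℤ) else j := by
  have hi' : (1:ℤ) ≤ (i:ℤ) := by exact_mod_cast hi
  simp only [s, Equiv.Perm.mul_apply]
  split_ifs with h1 h2 h3 h4
  · subst h1
    have h5 : Equiv.swap (-(i:ℤ)) (-((i:ℤ)+1)) (i:ℤ) = (i:ℤ) :=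
      Equiv.swap_apply_of_ne_of_ne (by omega) (by omega)
    rw [h5, Equiv.swap_apply_left]
  · subst h2
    have h5 : Equiv.swap (-(i:ℤ)) (-((i:ℤ)+1)) ((i:ℤ)+1) = (i:ℤ)+1 :=
      Equiv.swap_apply_of_ne_of_ne (by omega) (by omega)
    rw [h5, Equiv.swap_apply_right]
  · subst h3
    rw [Equiv.swap_apply_left]
    exact Equiv.swap_apply_of_ne_of_ne (by omega) (by omega)
  · subst h4
    rw [Equiv.swap_apply_right]
    exact Equiv.swap_apply_of_ne_of_ne (by omega) (by omega)
  · rw [Equiv.swap_apply_of_ne_of_ne h3 h4]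
    exact Equiv.swap_apply_of_ne_of_ne h1 h2

lemma xE_zero : xE 0 = t := by simp [xE]

lemma xE_succ (k : ℕ) : xE (k+1) = xE k * s (k+1) := by
  unfold xE
  rw [List.range_succ, List.map_append]
  simp [List.prod_append, mul_assoc]

lemma xE_apply (k : ℕ) (j : ℤ) :
    xE k j = if 1 ≤ j ∧ j ≤ (k:ℤ) then j + 1
      else if j = (k:ℤ)+1 then -1
      else if -(k:ℤ) ≤ j ∧ j ≤ -1 then j - 1
      else if j = -((k:ℤ)+1) then 1
      else j := by
  induction k generalizing j with
  | zero =>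
    rw [xE_zero, t, Equiv.swap_apply_def]
    push_cast
    split_ifs <;> omega
  | succ k ih =>
    rw [xE_succ, Equiv.Perm.mul_apply, s_apply_s5 (k+1) (by omega)]
    push_cast
    split_ifs <;> (rw [ih]; split_ifs <;> omega)

lemma xI_base (m : ℕ) : xI (m+1) (m+1) = xE m := by
  unfold xI xE
  have hl : (((List.range (m+1)).map fun j => j + 1).filter fun j => j ≠ m+1)
      = ((List.range m).map fun j => j + 1) := by
    rw [List.range_succ, List.map_append, List.filter_append]
    have h1 : (((List.range m).map fun j => j + 1).filter fun j => j ≠ m+1)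
        = ((List.range m).map fun j => j + 1) := by
      apply List.filter_eq_self.2
      intro a ha
      simp only [List.mem_map, List.mem_range] at ha
      obtain ⟨b, hb, rfl⟩ := ha
      simp only [ne_eq, decide_eq_true_eq]
      omega
    rw [h1]
    simp
  rw [hl, List.map_map]
  rfl

lemma xI_succ (k i : ℕ) (h : i ≤ k) : xI (k+1) i = xI k i * s (k+1) := by
  unfold xI
  rw [List.range_succ, List.map_append, List.filter_append, List.map_append]
  have h1 : (([k].map fun j => j + 1).filter fun j => j ≠ i) = [k+1] := by
    simp only [List.map_cons, List.map_nil, List.filter_cons, List.filter_nil]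
    have : (k+1 ≠ i) := by omega
    simp [this]
  rw [h1]
  simp [List.prod_append, mul_assoc]

set_option maxHeartbeats 1600000 in
lemma xI_apply (k i : ℕ) (hi1 : 1 ≤ i) (hik : i ≤ k) (j : ℤ) :
    xI k i j = if j = (i:ℤ) then -1
      else if 1 ≤ j ∧ j ≤ (k:ℤ) then j + 1
      else if j = (k:ℤ)+1 then (i:ℤ)+1
      else if j = -(i:ℤ) then 1
      else if -(k:ℤ) ≤ j ∧ j ≤ -1 then j - 1
      else if j = -((k:ℤ)+1) then -(i:ℤ)-1
      else j := by
  obtain ⟨m, rfl⟩ : ∃ m, i = m + 1 := ⟨i - 1, by omega⟩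
  induction k, hik using Nat.le_induction generalizing j with
  | base =>
    rw [xI_base, xE_apply]
    push_cast
    split_ifs <;> omega
  | succ k hk ih =>
    rw [xI_succ _ _ hk, Equiv.Perm.mul_apply, s_apply_s5 (k+1) (by omega)]
    push_cast
    split_ifs <;> (rw [ih]; split_ifs <;> omega)

lemma inv_eq (e : Equiv.Perm ℤ) {a b : ℤ} (h : e a = b) : e⁻¹ b = a := by
  rw [← h]
  exact e.symm_apply_apply a

lemma count_shift (m : ℕ) (p q : ℤ → Prop) [DecidablePred p] [DecidablePred q]
    (h : ∀ j : ℤ, 1 ≤ j → j ≤ (m:ℤ) → (p (j+1) ↔ q j)) :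
    ((Finset.Icc (1:ℤ) ((m:ℤ)+1)).filter p).card
      = ((Finset.Icc (1:ℤ) (m:ℤ)).filter q).card + (if p 1 then 1 else 0) := by
  classical
  have himg : Finset.Icc (2:ℤ) ((m:ℤ)+1) = (Finset.Icc (1:ℤ) (m:ℤ)).image (· + 1) := by
    rw [Finset.image_add_right_Icc]; norm_num
  have key : ((Finset.Icc (2:ℤ) ((m:ℤ)+1)).filter p).card
      = ((Finset.Icc (1:ℤ) (m:ℤ)).filter q).card := by
    rw [himg, Finset.filter_image, Finset.card_image_of_injective _ (add_left_injective 1)]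
    congr 1
    apply Finset.filter_congr
    intro j hj
    simp only [Finset.mem_Icc] at hj
    simpa using h j hj.1 hj.2
  have hsplit : Finset.Icc (1:ℤ) ((m:ℤ)+1) = insert 1 (Finset.Icc (2:ℤ) ((m:ℤ)+1)) := by
    ext j
    simp only [Finset.mem_Icc, Finset.mem_insert]
    omega
  rw [hsplit, Finset.filter_insert]
  by_cases hp : p 1
  · rw [if_pos hp, if_pos hp, Finset.card_insert_of_notMem (by simp), key]
  · rw [if_neg hp, if_neg hp, key, Nat.add_zero]

lemma negOf_app (w : Equiv.Perm ℤ) (j : ℤ) : negOf w j = -(w j) := rfl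

set_option maxHeartbeats 1600000 in
theorem aFix_succ (k : ℕ) (hk : 1 ≤ k) (w : Equiv.Perm ℤ) (hw : Good k w) :
    (aFix (k + 1) (xE k * w * (xE k)⁻¹) = aFix k w + 1 ∧
      aFix (k + 1) (negOf (xE k * w * (xE k)⁻¹)) = aFix k (negOf w)) ∧
    (aFix (k + 1) (xE k * w * (xE k)⁻¹ * t) = aFix k w ∧
      aFix (k + 1) (negOf (xE k * w * (xE k)⁻¹ * t)) = aFix k (negOf w) + 1) ∧
    (∀ i : ℕ, 1 ≤ i → i ≤ k → w (i : ℤ) = (i : ℤ) →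
      aFix (k + 1) (xE k * w * (xI k i)⁻¹) = aFix k w - 1 ∧
      aFix (k + 1) (negOf (xE k * w * (xI k i)⁻¹)) = aFix k (negOf w)) := by
  obtain ⟨⟨hodd, hfar⟩, hsq, hgood⟩ := hw
  have hww : ∀ j : ℤ, w (w j) = j := by
    intro j
    have h := congr_arg (fun e : Equiv.Perm ℤ => e j) hsq
    simpa [Equiv.Perm.mul_apply] using h
  have hrange : ∀ j : ℤ, 1 ≤ j → j ≤ (k:ℤ) → (w j = j ∨ (-(k:ℤ) ≤ w j ∧ w j ≤ -1)) := by
    intro j h1 h2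
    rcases hgood j h1 h2 with h | h
    · exact Or.inl h
    · refine Or.inr ⟨?_, by omega⟩
      by_contra hc
      push_neg at hc
      have h3 : w (w j) = w j := hfar _ (by rw [abs_of_neg h]; omega)
      rw [hww] at h3
      omega
  have hx := xE_apply k
  have hxinv1 : (xE k)⁻¹ 1 = -((k:ℤ)+1) := inv_eq _ (by rw [hx]; split_ifs <;> omega)
  have hxinvneg1 : (xE k)⁻¹ (-1) = (k:ℤ)+1 := inv_eq _ (by rw [hx]; split_ifs <;> omega)
  have hxinvj : ∀ j : ℤ, 1 ≤ j → j ≤ (k:ℤ) → (xE k)⁻¹ (j+1) = j := by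
    intro j h1 h2
    exact inv_eq _ (by rw [hx]; split_ifs <;> omega)
  have hy1 : (xE k * w * (xE k)⁻¹) 1 = 1 := by
    simp only [Equiv.Perm.mul_apply, hxinv1]
    rw [hfar _ (by rw [abs_of_neg (by omega)]; omega), hx]
    split_ifs <;> omega
  have hyneg1 : (xE k * w * (xE k)⁻¹) (-1) = -1 := by
    simp only [Equiv.Perm.mul_apply, hxinvneg1]
    rw [hfar _ (by rw [abs_of_pos (by omega)]; omega), hx]
    split_ifs <;> omega
  have hyval : ∀ j : ℤ, 1 ≤ j → j ≤ (k:ℤ) →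
      (xE k * w * (xE k)⁻¹) (j+1) = xE k (w j) := by
    intro j h1 h2
    simp only [Equiv.Perm.mul_apply, hxinvj j h1 h2]
  have ht1 : t 1 = -1 := Equiv.swap_apply_right _ _
  have htj : ∀ j : ℤ, 1 ≤ j → t (j+1) = j+1 := fun j h =>
    Equiv.swap_apply_of_ne_of_ne (by omega) (by omega)
  have hcast : (((k+1 : ℕ)) : ℤ) = (k:ℤ)+1 := by push_cast; ring
  refine ⟨⟨?_, ?_⟩, ⟨?_, ?_⟩, ?_⟩
  · -- a(xwx⁻¹) = a(w) + 1
    unfold aFix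
    rw [hcast, count_shift k _ (fun j => w j = j) (fun j h1 h2 => by
      rw [hyval j h1 h2, hx]
      rcases hrange j h1 h2 with h|h <;> (split_ifs <;> omega)), if_pos hy1]
  · -- a(-xwx⁻¹) = a(-w)
    unfold aFix
    rw [hcast, count_shift k _ (fun j => negOf w j = j) (fun j h1 h2 => by
      simp only [negOf_app]
      rw [hyval j h1 h2, hx]
      rcases hrange j h1 h2 with h|h <;> (split_ifs <;> omega)),
      if_neg (by simp only [negOf_app, hy1]; omega), Nat.add_zero]
  · -- a(xwx⁻¹ t) = a(w)
    unfold aFix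
    rw [hcast, count_shift k _ (fun j => w j = j) (fun j h1 h2 => by
      rw [Equiv.Perm.mul_apply, htj j h1, hyval j h1 h2, hx]
      rcases hrange j h1 h2 with h|h <;> (split_ifs <;> omega)),
      if_neg (by rw [Equiv.Perm.mul_apply, ht1, hyneg1]; omega), Nat.add_zero]
  · -- a(-xwx⁻¹ t) = a(-w) + 1
    unfold aFix
    rw [hcast, count_shift k _ (fun j => negOf w j = j) (fun j h1 h2 => by
      simp only [negOf_app, Equiv.Perm.mul_apply]
      rw [htj j h1]
      have := hyval j h1 h2
      simp only [Equiv.Perm.mul_apply] at this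
      rw [this, hx]
      rcases hrange j h1 h2 with h|h <;> (split_ifs <;> omega)),
      if_pos (by simp only [negOf_app, Equiv.Perm.mul_apply, ht1]
                 have := hyneg1
                 simp only [Equiv.Perm.mul_apply] at this
                 rw [this]
                 omega)]
  · -- the xI claims
    intro i hi1 hik hwi
    have hi1' : (1:ℤ) ≤ (i:ℤ) := by exact_mod_cast hi1
    have hik' : (i:ℤ) ≤ (k:ℤ) := by exact_mod_cast hik
    have hxi := xI_apply k i hi1 hik
    have hxiinv1 : (xI k i)⁻¹ 1 = -(i:ℤ) := inv_eq _ (by rw [hxi]; split_ifs <;> omega)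
    have hxiinvi : (xI k i)⁻¹ ((i:ℤ)+1) = (k:ℤ)+1 := inv_eq _ (by rw [hxi]; split_ifs <;> omega)
    have hxiinvj : ∀ j : ℤ, 1 ≤ j → j ≤ (k:ℤ) → j ≠ (i:ℤ) → (xI k i)⁻¹ (j+1) = j := by
      intro j h1 h2 h3
      exact inv_eq _ (by rw [hxi]; split_ifs <;> omega)
    have hy31 : (xE k * w * (xI k i)⁻¹) 1 = -((i:ℤ)+1) := by
      simp only [Equiv.Perm.mul_apply, hxiinv1]
      rw [hodd (i:ℤ), hwi, hx]
      split_ifs <;> omega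
    have hy3i : (xE k * w * (xI k i)⁻¹) ((i:ℤ)+1) = -1 := by
      simp only [Equiv.Perm.mul_apply, hxiinvi]
      rw [hfar _ (by rw [abs_of_pos (by omega)]; omega), hx]
      split_ifs <;> omega
    have hy3val : ∀ j : ℤ, 1 ≤ j → j ≤ (k:ℤ) → j ≠ (i:ℤ) →
        (xE k * w * (xI k i)⁻¹) (j+1) = xE k (w j) := by
      intro j h1 h2 h3
      simp only [Equiv.Perm.mul_apply, hxiinvj j h1 h2 h3]
    constructor
    · unfold aFix
      rw [hcast, count_shift k _ (fun j => w j = j ∧ j ≠ (i:ℤ)) (fun j h1 h2 => by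
        rcases eq_or_ne j (i:ℤ) with hji | hji
        · subst hji
          rw [hy3i]
          omega
        · rw [hy3val j h1 h2 hji, hx]
          rcases hrange j h1 h2 with h|h <;> (split_ifs <;> omega)),
        if_neg (by rw [hy31]; omega), Nat.add_zero]
      have hicc : (i:ℤ) ∈ (Finset.Icc (1:ℤ) (k:ℤ)).filter (fun j => w j = j) := by
        simp only [Finset.mem_filter, Finset.mem_Icc]
        exact ⟨⟨hi1', hik'⟩, hwi⟩
      have heq : (Finset.Icc (1:ℤ) (k:ℤ)).filter (fun j => w j = j ∧ j ≠ (i:ℤ))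
          = ((Finset.Icc (1:ℤ) (k:ℤ)).filter (fun j => w j = j)).erase (i:ℤ) := by
        ext j
        simp only [Finset.mem_filter, Finset.mem_erase, Finset.mem_Icc]
        tauto
      rw [heq, Finset.card_erase_of_mem hicc]
    · unfold aFix
      rw [hcast, count_shift k _ (fun j => negOf w j = j) (fun j h1 h2 => by
        simp only [negOf_app]
        rcases eq_or_ne j (i:ℤ) with hji | hji
        · subst hji
          rw [hy3i, hwi]
          omega
        · rw [hy3val j h1 h2 hji, hx]
          rcases hrange j h1 h2 with h|h <;> (split_ifs <;> omega)),
        if_neg (by simp only [negOf_app]; rw [hy31]; omega), Nat.add_zero]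

end PaperB
end
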